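/- arXiv:1405.4445 — 5 statements merged into one kernel-verified Lean document; each statement's English description precedes it below -/
import Mathlib

section
/- For every natural number n and integer a ≥ 1, ∑_{k=0}^{n} C(n,k) C(n+k,k) a^k equals the constant term of the Laurent polynomial ((1+x)(a + (a+1)x)/x)^n. -/
open LaurentPolynomial Polynomial in
lemma coeff_one_add_T_pow (m k : ℕ) :
    (((1 + T 1 : LaurentPolynomial ℤ)) ^ m).coeff (k : ℤ) = (m.choose k : ℤ) := by
  have h : ((1 + T 1 : LaurentPolynomial ℤ)) ^ m = toLaurent ((1 + X) ^ m) := by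
    simp [toLaurent_X]
  rw [h, Polynomial.toLaurent_apply, AddMonoidAlgebra.mapDomain, AddMonoidAlgebra.coeff_ofCoeff,
    Finsupp.mapDomain_apply (fun a b hab => by exact_mod_cast hab) _ k]
  exact Polynomial.coeff_one_add_X_pow ℤ m k

open LaurentPolynomial in
theorem sum_eq_constant_term (n : ℕ) (a : ℤ) (ha : 1 ≤ a) :
    (∑ k ∈ Finset.range (n + 1), (n.choose k : ℤ) * ((n + k).choose k : ℤ) * a ^ k) =
      ((((1 + T 1) * (C a + C (a + 1) * T 1) * T (-1) : LaurentPolynomial ℤ)) ^ n).coeff 0 := by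
  have h1 : (T 1 * T (-1) : LaurentPolynomial ℤ) = 1 := by
    rw [← T_add]; norm_num
  have hCa : (C (a + 1) : LaurentPolynomial ℤ) = C a + 1 := by simp [map_add]
  have key : ((1 + T 1) * (C a + C (a + 1) * T 1) * T (-1) : LaurentPolynomial ℤ)
      = C a * (1 + T 1) ^ 2 * T (-1) + (1 + T 1) := by
    rw [hCa]
    linear_combination (1 + T 1 : LaurentPolynomial ℤ) * h1
  rw [key, add_pow, AddMonoidAlgebra.coeff_sum, Finsupp.finset_sum_apply]
  apply Finset.sum_congr rfl
  intro k hk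
  have hk' : k ≤ n := Nat.lt_succ_iff.mp (Finset.mem_range.mp hk)
  have hterm : (C a * (1 + T 1) ^ 2 * T (-1) : LaurentPolynomial ℤ) ^ k * (1 + T 1) ^ (n - k)
      * (n.choose k : LaurentPolynomial ℤ)
      = C ((n.choose k : ℤ) * a ^ k) * ((1 + T 1) ^ (n + k) * T (-k)) := by
    have hnk : 2 * k + (n - k) = n + k := by omega
    rw [mul_pow, mul_pow, T_pow, ← pow_mul, map_mul, map_pow]
    rw [show (C ((n.choose k : ℕ) : ℤ) : LaurentPolynomial ℤ)
      = (n.choose k : LaurentPolynomial ℤ) by simp]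
    rw [show ((k : ℕ) * (-1) : ℤ) = -(k : ℤ) by push_cast; ring]
    rw [show ((1 + T 1 : LaurentPolynomial ℤ)) ^ (n + k)
      = (1 + T 1) ^ (2 * k) * (1 + T 1) ^ (n - k) by rw [← pow_add, hnk]]
    ring
  rw [hterm]
  have hT : (T (-(k:ℤ)) : LaurentPolynomial ℤ) = AddMonoidAlgebra.single (-(k:ℤ)) 1 := rfl
  rw [← single_eq_C, AddMonoidAlgebra.coeff_single_zero_mul, hT,
    AddMonoidAlgebra.coeff_mul_single_apply]
  simp only [zero_sub, neg_neg, mul_one, zero_add]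
  rw [coeff_one_add_T_pow]
  ring
end

section
/- The sequence q(n) = ∑_{k=0}^{n} C(n,k) C(n+k,k) (the denominators in Apéry's proof of the irrationality of ln 2) satisfies the recurrence (n+2)q(n+2) − (6n+9)q(n+1) + (n+1)q(n) = 0 with q(0)=1, q(1)=3. -/
private lemma chooseA (j k : ℕ) :
    (((k + j + 1).choose k : ℤ)) * ((j : ℤ) + 1)
      = ((k + j).choose k : ℤ) * ((k : ℤ) + (j : ℤ) + 1) := by
  have h := Nat.choose_mul_succ_eq (k + j) k
  have h2 : k + j + 1 - k = j + 1 := by omega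
  rw [h2] at h
  exact_mod_cast h.symm

private lemma chooseB (j k : ℕ) :
    (((k + j).choose (k + 1) : ℤ)) * ((k : ℤ) + 1)
      = ((k + j).choose k : ℤ) * (j : ℤ) := by
  have h := Nat.choose_succ_right_eq (k + j) k
  have h2 : k + j - k = j := by omega
  rw [h2] at h
  exact_mod_cast h

private lemma key (n k : ℕ) :
    ((n : ℤ) + 1) * ((n : ℤ) + 2) *
      ( ((n : ℤ) + 2) * ((n + 2).choose k : ℤ) * ((n + 2 + k).choose k : ℤ)
        - (6 * (n : ℤ) + 9) * ((n + 1).choose k : ℤ) * ((n + 1 + k).choose k : ℤ)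
        + ((n : ℤ) + 1) * (n.choose k : ℤ) * ((n + k).choose k : ℤ) )
    + (4 * (n : ℤ) + 6) *
      ( ((k : ℤ) + 1) ^ 2 * ((n + 2).choose (k + 1) : ℤ) * ((n + k + 1).choose (k + 1) : ℤ)
        - (k : ℤ) ^ 2 * ((n + 2).choose k : ℤ) * ((n + k).choose k : ℤ) ) = 0 := by
  rcases le_or_gt k n with hkn | hkn
  · -- main case: n = k + j
    obtain ⟨j, rfl⟩ : ∃ j, n = k + j := ⟨n - k, by omega⟩
    rw [show k + j + 2 + k = k + j + k + 2 by omega, show k + j + 1 + k = k + j + k + 1 by omega]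
    have H1 := chooseA j k
    have H2 := chooseA (j + 1) k
    rw [show k + (j + 1) + 1 = k + j + 2 by omega, show k + (j + 1) = k + j + 1 by omega] at H2
    have H3 := chooseA (j + k) k
    rw [show k + (j + k) + 1 = k + j + k + 1 by omega, show k + (j + k) = k + j + k by omega] at H3
    have H4 := chooseA (j + k + 1) k
    rw [show k + (j + k + 1) + 1 = k + j + k + 2 by omega,
        show k + (j + k + 1) = k + j + k + 1 by omega] at H4
    have H5 := chooseB (j + 2) k
    rw [show k + (j + 2) = k + j + 2 by omega] at H5
    have H6 := chooseB (j + k + 1) k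
    rw [show k + (j + k + 1) = k + j + k + 1 by omega] at H6
    push_cast at H1 H2 H3 H4 H5 H6 ⊢
    set a := ((k + j).choose k : ℤ)
    set b := ((k + j + k).choose k : ℤ)
    set c1 := ((k + j + 1).choose k : ℤ)
    set c2 := ((k + j + 2).choose k : ℤ)
    set d1 := ((k + j + k + 1).choose k : ℤ)
    set d2 := ((k + j + k + 2).choose k : ℤ)
    set e := ((k + j + 2).choose (k + 1) : ℤ)
    set f := ((k + j + k + 1).choose (k + 1) : ℤ)
    set K := (k : ℤ); set J := (j : ℤ)
    have Hc2 : c2 * ((J + 1) * (J + 2)) = a * ((K + J + 1) * (K + J + 2)) := by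
      linear_combination (J + 1) * H2 + (K + J + 2) * H1
    have Hd2 : d2 * ((K + J + 1) * (K + J + 2)) = b * ((2*K + J + 1) * (2*K + J + 2)) := by
      linear_combination (K + J + 1) * H4 + (2*K + J + 2) * H3
    have Hcd : c2 * d2 * ((J + 1) * (J + 2) * (K + J + 1) * (K + J + 2))
        = a * b * ((K + J + 1) * (K + J + 2) * (2*K + J + 1) * (2*K + J + 2)) := by
      linear_combination (c2 * (J + 1) * (J + 2)) * Hd2
        + (b * (2*K + J + 1) * (2*K + J + 2)) * Hc2
    have Hc1d1 : c1 * d1 * ((J + 1) * (K + J + 1)) = a * b * ((K + J + 1) * (2*K + J + 1)) := by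
      linear_combination (c1 * (J + 1)) * H3 + (b * (2*K + J + 1)) * H1
    have Hefs : e * f * ((K + 1) ^ 2) = c2 * d1 * ((J + 2) * (K + J + 1)) := by
      linear_combination (e * (K + 1)) * H6 + (d1 * (K + J + 1)) * H5
    have Heft : e * f * ((K + 1) ^ 2 * (J + 1) * (J + 2))
        = a * b * ((J + 2) * (K + J + 1) * (K + J + 2) * (2*K + J + 1)) := by
      linear_combination (J + 1) * (J + 2) * Hefs + (d1 * (J + 2) * (K + J + 1)) * Hc2
        + (a * (K + J + 1) * (K + J + 2) * (J + 2)) * H3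
    have hM : ((J + 1) * (J + 2) * (K + J + 1) * (K + J + 2)) ≠ 0 := by positivity
    refine mul_left_cancel₀ hM ?_
    linear_combination (K + J + 1) * (K + J + 2) * (K + J + 2) * Hcd
      - (K + J + 1) * (K + J + 2) * (6*(K + J) + 9) * (J + 2) * (K + J + 2) * Hc1d1
      + (4*(K + J) + 6) * (K + J + 1) * (K + J + 2) * Heft
      - (4*(K + J) + 6) * K ^ 2 * (K + J + 1) * (K + J + 2) * b * Hc2
  · rcases (show k = n + 1 ∨ k = n + 2 ∨ n + 3 ≤ k by omega) with rfl | h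
    · -- k = n + 1
      rw [show n + 2 + (n + 1) = 2*n + 3 by omega, show n + 1 + (n + 1) = 2*n + 2 by omega,
          show n + (n + 1) + 1 = 2*n + 2 by omega, show n + (n + 1) = 2*n + 1 by omega,
          show (n + 1) + 1 = n + 2 by omega, show 2*n + 1 + 1 = 2*n + 2 by omega]
      rw [Nat.choose_succ_self_right, Nat.choose_self, Nat.choose_self,
          Nat.choose_eq_zero_of_lt (by omega : n < n + 1)]
      have hA := chooseA (n + 1) (n + 1)
      rw [show (n + 1) + (n + 1) + 1 = 2*n + 3 by omega,
          show (n + 1) + (n + 1) = 2*n + 2 by omega] at hA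
      have hB := chooseA n (n + 1)
      rw [show (n + 1) + n + 1 = 2*n + 2 by omega, show (n + 1) + n = 2*n + 1 by omega] at hB
      have hC := chooseB (n + 1) (n + 1)
      rw [show (n + 1) + (n + 1) = 2*n + 2 by omega, show (n + 1) + 1 = n + 2 by omega] at hC
      push_cast at hA hB hC ⊢
      linear_combination ((n : ℤ) + 1) * ((n : ℤ) + 2) ^ 2 * hA
        + (2*(n : ℤ) + 3) * ((n : ℤ) + 1) * ((n : ℤ) + 2) * hB
        + (4*(n : ℤ) + 6) * ((n : ℤ) + 2) * hC
    rcases h with rfl | h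
    · -- k = n + 2
      rw [show n + 2 + (n + 2) = 2*n + 4 by omega, show n + 1 + (n + 2) = 2*n + 3 by omega,
          show n + (n + 2) + 1 = 2*n + 3 by omega, show n + (n + 2) = 2*n + 2 by omega,
          show (n + 2) + 1 = n + 3 by omega, show 2*n + 2 + 1 = 2*n + 3 by omega]
      rw [Nat.choose_self, Nat.choose_eq_zero_of_lt (by omega : n + 1 < n + 2),
          Nat.choose_eq_zero_of_lt (by omega : n < n + 2),
          Nat.choose_eq_zero_of_lt (by omega : n + 2 < n + 3)]
      have h1' := chooseA (n + 1) (n + 2)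
      rw [show (n + 2) + (n + 1) + 1 = 2*n + 4 by omega,
          show (n + 2) + (n + 1) = 2*n + 3 by omega] at h1'
      have h2' := chooseA n (n + 2)
      rw [show (n + 2) + n + 1 = 2*n + 3 by omega, show (n + 2) + n = 2*n + 2 by omega] at h2'
      push_cast at h1' h2' ⊢
      linear_combination ((n : ℤ) + 1) * ((n : ℤ) + 2) * h1'
        + ((n : ℤ) + 2) * (2*(n : ℤ) + 4) * h2'
    · -- k ≥ n + 3
      rw [Nat.choose_eq_zero_of_lt (by omega : n + 2 < k),
          Nat.choose_eq_zero_of_lt (by omega : n + 1 < k),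
          Nat.choose_eq_zero_of_lt (by omega : n < k),
          Nat.choose_eq_zero_of_lt (by omega : n + 2 < k + 1)]
      push_cast
      ring

theorem ln2_recurrence (q : ℕ → ℤ)
    (hq : ∀ n : ℕ, q n = ∑ k ∈ Finset.range (n + 1),
      (n.choose k : ℤ) * ((n + k).choose k : ℤ)) :
    q 0 = 1 ∧ q 1 = 3 ∧ ∀ n : ℕ,
      ((n : ℤ) + 2) * q (n + 2) - (6 * (n : ℤ) + 9) * q (n + 1) + ((n : ℤ) + 1) * q n = 0 := by
  refine ⟨by rw [hq]; simp, by rw [hq]; norm_num [Finset.sum_range_succ], ?_⟩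
  intro n
  -- extended sums over range (n + 3)
  have s2 : q (n + 2) = ∑ i ∈ Finset.range (n + 3),
      ((n + 2).choose i : ℤ) * ((n + 2 + i).choose i : ℤ) := by
    rw [hq]
  have s1 : q (n + 1) = ∑ i ∈ Finset.range (n + 3),
      ((n + 1).choose i : ℤ) * ((n + 1 + i).choose i : ℤ) := by
    conv_rhs => rw [show n + 3 = (n + 2) + 1 by omega, Finset.sum_range_succ]
    rw [hq, show n + 1 + 1 = n + 2 by omega,
        Nat.choose_eq_zero_of_lt (by omega : n + 1 < n + 2)]
    push_cast
    ring
  have s0 : q n = ∑ i ∈ Finset.range (n + 3),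
      (n.choose i : ℤ) * ((n + i).choose i : ℤ) := by
    conv_rhs => rw [show n + 3 = (n + 2) + 1 by omega, Finset.sum_range_succ,
      show n + 2 = (n + 1) + 1 by omega, Finset.sum_range_succ]
    rw [hq, Nat.choose_eq_zero_of_lt (by omega : n < n + 1),
        Nat.choose_eq_zero_of_lt (by omega : n < n + 2)]
    push_cast
    ring
  have tele := Finset.sum_range_sub
    (fun k => (k : ℤ) ^ 2 * ((n + 2).choose k : ℤ) * ((n + k).choose k : ℤ)) (n + 3)
  have main : ((n : ℤ) + 1) * ((n : ℤ) + 2) *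
      (((n : ℤ) + 2) * q (n + 2) - (6 * (n : ℤ) + 9) * q (n + 1) + ((n : ℤ) + 1) * q n) = 0 := by
    rw [s2, s1, s0]
    have merged : ∑ i ∈ Finset.range (n + 3),
        ( ((n : ℤ) + 1) * ((n : ℤ) + 2) *
          ( ((n : ℤ) + 2) * ((n + 2).choose i : ℤ) * ((n + 2 + i).choose i : ℤ)
            - (6 * (n : ℤ) + 9) * ((n + 1).choose i : ℤ) * ((n + 1 + i).choose i : ℤ)
            + ((n : ℤ) + 1) * (n.choose i : ℤ) * ((n + i).choose i : ℤ) ) )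
        = ∑ i ∈ Finset.range (n + 3),
          ( -(4 * (n : ℤ) + 6) *
            ( ((i : ℤ) + 1) ^ 2 * ((n + 2).choose (i + 1) : ℤ) * ((n + (i + 1)).choose (i + 1) : ℤ)
              - (i : ℤ) ^ 2 * ((n + 2).choose i : ℤ) * ((n + i).choose i : ℤ) ) ) := by
      refine Finset.sum_congr rfl fun i _ => ?_
      have hk := key n i
      rw [show n + (i + 1) = n + i + 1 by omega]
      linear_combination hk
    calc ((n : ℤ) + 1) * ((n : ℤ) + 2) *
        (((n : ℤ) + 2) * (∑ i ∈ Finset.range (n + 3),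
            ((n + 2).choose i : ℤ) * ((n + 2 + i).choose i : ℤ))
          - (6 * (n : ℤ) + 9) * (∑ i ∈ Finset.range (n + 3),
            ((n + 1).choose i : ℤ) * ((n + 1 + i).choose i : ℤ))
          + ((n : ℤ) + 1) * (∑ i ∈ Finset.range (n + 3),
            (n.choose i : ℤ) * ((n + i).choose i : ℤ)))
        = ∑ i ∈ Finset.range (n + 3),
          ( ((n : ℤ) + 1) * ((n : ℤ) + 2) *
            ( ((n : ℤ) + 2) * ((n + 2).choose i : ℤ) * ((n + 2 + i).choose i : ℤ)
              - (6 * (n : ℤ) + 9) * ((n + 1).choose i : ℤ) * ((n + 1 + i).choose i : ℤ)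
              + ((n : ℤ) + 1) * (n.choose i : ℤ) * ((n + i).choose i : ℤ) ) ) := by
          simp only [Finset.mul_sum, ← Finset.sum_sub_distrib, ← Finset.sum_add_distrib]
          exact Finset.sum_congr rfl fun i _ => by ring
      _ = ∑ i ∈ Finset.range (n + 3),
          ( -(4 * (n : ℤ) + 6) *
            ( ((i : ℤ) + 1) ^ 2 * ((n + 2).choose (i + 1) : ℤ) * ((n + (i + 1)).choose (i + 1) : ℤ)
              - (i : ℤ) ^ 2 * ((n + 2).choose i : ℤ) * ((n + i).choose i : ℤ) ) ) := merged
      _ = -(4 * (n : ℤ) + 6) * ∑ i ∈ Finset.range (n + 3),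
            ( ((i : ℤ) + 1) ^ 2 * ((n + 2).choose (i + 1) : ℤ) * ((n + (i + 1)).choose (i + 1) : ℤ)
              - (i : ℤ) ^ 2 * ((n + 2).choose i : ℤ) * ((n + i).choose i : ℤ) ) := by
          rw [Finset.mul_sum]
      _ = 0 := by
          have t : ∑ i ∈ Finset.range (n + 3),
              ( ((i : ℤ) + 1) ^ 2 * ((n + 2).choose (i + 1) : ℤ) * ((n + (i + 1)).choose (i + 1) : ℤ)
                - (i : ℤ) ^ 2 * ((n + 2).choose i : ℤ) * ((n + i).choose i : ℤ) ) = 0 := by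
            refine Eq.trans (Finset.sum_congr rfl fun i _ => ?_) (tele.trans ?_)
            · push_cast
              ring
            · rw [Nat.choose_eq_zero_of_lt (by omega : n + 2 < n + 3)]
              push_cast
              ring
          rw [t, mul_zero]
  have hne : ((n : ℤ) + 1) * ((n : ℤ) + 2) ≠ 0 := by positivity
  exact (mul_eq_zero.mp main).resolve_left hne
end

section
/- The sequence q(n) = ∑_{k=0}^{n} C(n,k)^2 C(n+k,k) satisfies the recurrence (n+2)^2 q(n+2) − (11n^2 + 33n + 25) q(n+1) − (n+1)^2 q(n) = 0 with q(0)=1, q(1)=3. -/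
open Nat Finset

private def gg (n : ℕ) : ℕ → ℤ
  | 0 => 0
  | k + 1 =>
      (((k : ℤ) + 1) ^ 2 + 6 * (n : ℤ) * ((k : ℤ) + 1) + 7 * ((k : ℤ) + 1)
          - 11 * (n : ℤ) ^ 2 - 37 * (n : ℤ) - 30)
        * ((n + 1).choose k : ℤ) ^ 2 * ((n + k + 1).choose k : ℤ)

private lemma fact_ne (m : ℕ) : ((m ! : ℚ)) ≠ 0 :=
  Nat.cast_ne_zero.mpr (Nat.factorial_ne_zero m)

private lemma aux_main (d j : ℕ) :
    ((d : ℚ) + j + 3) ^ 2 * ((d + j + 3).choose (j + 1) : ℚ) ^ 2 * ((d + 2 * j + 4).choose (j + 1) : ℚ)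
      - (11 * ((d : ℚ) + j + 1) ^ 2 + 33 * ((d : ℚ) + j + 1) + 25)
        * ((d + j + 2).choose (j + 1) : ℚ) ^ 2 * ((d + 2 * j + 3).choose (j + 1) : ℚ)
      - ((d : ℚ) + j + 2) ^ 2 * ((d + j + 1).choose (j + 1) : ℚ) ^ 2 * ((d + 2 * j + 2).choose (j + 1) : ℚ)
    = (((j : ℚ) + 2) ^ 2 + 6 * ((d : ℚ) + j + 1) * ((j : ℚ) + 2) + 7 * ((j : ℚ) + 2)
          - 11 * ((d : ℚ) + j + 1) ^ 2 - 37 * ((d : ℚ) + j + 1) - 30)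
        * ((d + j + 2).choose (j + 1) : ℚ) ^ 2 * ((d + 2 * j + 3).choose (j + 1) : ℚ)
      - (((j : ℚ) + 1) ^ 2 + 6 * ((d : ℚ) + j + 1) * ((j : ℚ) + 1) + 7 * ((j : ℚ) + 1)
          - 11 * ((d : ℚ) + j + 1) ^ 2 - 37 * ((d : ℚ) + j + 1) - 30)
        * ((d + j + 2).choose j : ℚ) ^ 2 * ((d + 2 * j + 2).choose j : ℚ) := by
  rw [Nat.cast_choose ℚ (show j + 1 ≤ d + j + 3 by omega),
      Nat.cast_choose ℚ (show j + 1 ≤ d + 2 * j + 4 by omega),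
      Nat.cast_choose ℚ (show j + 1 ≤ d + j + 2 by omega),
      Nat.cast_choose ℚ (show j + 1 ≤ d + 2 * j + 3 by omega),
      Nat.cast_choose ℚ (show j + 1 ≤ d + j + 1 by omega),
      Nat.cast_choose ℚ (show j + 1 ≤ d + 2 * j + 2 by omega),
      Nat.cast_choose ℚ (show j ≤ d + j + 2 by omega),
      Nat.cast_choose ℚ (show j ≤ d + 2 * j + 2 by omega)]
  simp only [show d + j + 3 - (j + 1) = d + 2 by omega,
    show d + 2 * j + 4 - (j + 1) = d + j + 3 by omega,
    show d + j + 2 - (j + 1) = d + 1 by omega,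
    show d + 2 * j + 3 - (j + 1) = d + j + 2 by omega,
    show d + j + 1 - (j + 1) = d by omega,
    show d + 2 * j + 2 - (j + 1) = d + j + 1 by omega,
    show d + j + 2 - j = d + 2 by omega,
    show d + 2 * j + 2 - j = d + j + 2 by omega]
  have hf1 : ((j + 1)! : ℚ) = ((j : ℚ) + 1) * (j ! : ℚ) := by
    rw [Nat.factorial_succ]; push_cast; ring
  have hf2 : ((d + 1)! : ℚ) = ((d : ℚ) + 1) * (d ! : ℚ) := by
    rw [Nat.factorial_succ]; push_cast; ring
  have hf3 : ((d + 2)! : ℚ) = ((d : ℚ) + 2) * (((d : ℚ) + 1) * (d ! : ℚ)) := by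
    rw [show d + 2 = (d + 1) + 1 by omega, Nat.factorial_succ, Nat.factorial_succ]
    push_cast; ring
  have hf4 : ((d + j + 2)! : ℚ) = ((d : ℚ) + j + 2) * ((d + j + 1)! : ℚ) := by
    rw [show d + j + 2 = (d + j + 1) + 1 by omega, Nat.factorial_succ]; push_cast; ring
  have hf5 : ((d + j + 3)! : ℚ)
      = ((d : ℚ) + j + 3) * (((d : ℚ) + j + 2) * ((d + j + 1)! : ℚ)) := by
    rw [show d + j + 3 = (d + j + 2) + 1 by omega, Nat.factorial_succ,
        show d + j + 2 = (d + j + 1) + 1 by omega, Nat.factorial_succ]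
    push_cast; ring
  have hf6 : ((d + 2 * j + 3)! : ℚ) = ((d : ℚ) + 2 * j + 3) * ((d + 2 * j + 2)! : ℚ) := by
    rw [show d + 2 * j + 3 = (d + 2 * j + 2) + 1 by omega, Nat.factorial_succ]; push_cast; ring
  have hf7 : ((d + 2 * j + 4)! : ℚ)
      = ((d : ℚ) + 2 * j + 4) * (((d : ℚ) + 2 * j + 3) * ((d + 2 * j + 2)! : ℚ)) := by
    rw [show d + 2 * j + 4 = (d + 2 * j + 3) + 1 by omega, Nat.factorial_succ,
        show d + 2 * j + 3 = (d + 2 * j + 2) + 1 by omega, Nat.factorial_succ]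
    push_cast; ring
  rw [hf1, hf2, hf3, hf4, hf5, hf6, hf7]
  have hA := fact_ne d
  have hB := fact_ne j
  have hC := fact_ne (d + j + 1)
  have hD := fact_ne (d + 2 * j + 2)
  have h1 : ((d : ℚ) + 1) ≠ 0 := by positivity
  have h2 : ((d : ℚ) + 2) ≠ 0 := by positivity
  have h3 : ((j : ℚ) + 1) ≠ 0 := by positivity
  have h4 : ((d : ℚ) + j + 2) ≠ 0 := by positivity
  have h5 : ((d : ℚ) + j + 3) ≠ 0 := by positivity
  field_simp
  ring

private lemma aux_np1 (n : ℕ) :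
    ((n : ℚ) + 2) ^ 2 * ((n : ℚ) + 2) ^ 2 * ((2 * n + 3).choose (n + 1) : ℚ)
      - (11 * (n : ℚ) ^ 2 + 33 * (n : ℚ) + 25) * ((2 * n + 2).choose (n + 1) : ℚ)
    = (((n : ℚ) + 2) ^ 2 + 6 * (n : ℚ) * ((n : ℚ) + 2) + 7 * ((n : ℚ) + 2)
          - 11 * (n : ℚ) ^ 2 - 37 * (n : ℚ) - 30) * ((2 * n + 2).choose (n + 1) : ℚ)
      - (((n : ℚ) + 1) ^ 2 + 6 * (n : ℚ) * ((n : ℚ) + 1) + 7 * ((n : ℚ) + 1)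
          - 11 * (n : ℚ) ^ 2 - 37 * (n : ℚ) - 30) * ((n : ℚ) + 1) ^ 2
        * ((2 * n + 1).choose n : ℚ) := by
  rw [Nat.cast_choose ℚ (show n + 1 ≤ 2 * n + 3 by omega),
      Nat.cast_choose ℚ (show n + 1 ≤ 2 * n + 2 by omega),
      Nat.cast_choose ℚ (show n ≤ 2 * n + 1 by omega)]
  simp only [show 2 * n + 3 - (n + 1) = n + 2 by omega,
    show 2 * n + 2 - (n + 1) = n + 1 by omega,
    show 2 * n + 1 - n = n + 1 by omega]
  have hf1 : ((n + 1)! : ℚ) = ((n : ℚ) + 1) * (n ! : ℚ) := by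
    rw [Nat.factorial_succ]; push_cast; ring
  have hf2 : ((n + 2)! : ℚ) = ((n : ℚ) + 2) * (((n : ℚ) + 1) * (n ! : ℚ)) := by
    rw [show n + 2 = (n + 1) + 1 by omega, Nat.factorial_succ, Nat.factorial_succ]
    push_cast; ring
  have hf3 : ((2 * n + 2)! : ℚ) = (2 * (n : ℚ) + 2) * ((2 * n + 1)! : ℚ) := by
    rw [show 2 * n + 2 = (2 * n + 1) + 1 by omega, Nat.factorial_succ]; push_cast; ring
  have hf4 : ((2 * n + 3)! : ℚ)
      = (2 * (n : ℚ) + 3) * ((2 * (n : ℚ) + 2) * ((2 * n + 1)! : ℚ)) := by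
    rw [show 2 * n + 3 = (2 * n + 2) + 1 by omega, Nat.factorial_succ,
        show 2 * n + 2 = (2 * n + 1) + 1 by omega, Nat.factorial_succ]
    push_cast; ring
  rw [hf1, hf2, hf3, hf4]
  have hA := fact_ne n
  have hC := fact_ne (2 * n + 1)
  have h1 : ((n : ℚ) + 1) ≠ 0 := by positivity
  have h2 : ((n : ℚ) + 2) ≠ 0 := by positivity
  field_simp
  ring

private lemma aux_np2 (n : ℕ) :
    ((n : ℚ) + 2) ^ 2 * ((2 * n + 4).choose (n + 2) : ℚ)
    = -(((n : ℚ) + 2) ^ 2 + 6 * (n : ℚ) * ((n : ℚ) + 2) + 7 * ((n : ℚ) + 2)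
          - 11 * (n : ℚ) ^ 2 - 37 * (n : ℚ) - 30) * ((2 * n + 2).choose (n + 1) : ℚ) := by
  rw [Nat.cast_choose ℚ (show n + 2 ≤ 2 * n + 4 by omega),
      Nat.cast_choose ℚ (show n + 1 ≤ 2 * n + 2 by omega)]
  simp only [show 2 * n + 4 - (n + 2) = n + 2 by omega,
    show 2 * n + 2 - (n + 1) = n + 1 by omega]
  have hf1 : ((n + 2)! : ℚ) = ((n : ℚ) + 2) * ((n + 1)! : ℚ) := by
    rw [show n + 2 = (n + 1) + 1 by omega, Nat.factorial_succ]; push_cast; ring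
  have hf2 : ((2 * n + 4)! : ℚ)
      = (2 * (n : ℚ) + 4) * ((2 * (n : ℚ) + 3) * ((2 * n + 2)! : ℚ)) := by
    rw [show 2 * n + 4 = (2 * n + 3) + 1 by omega, Nat.factorial_succ,
        show 2 * n + 3 = (2 * n + 2) + 1 by omega, Nat.factorial_succ]
    push_cast; ring
  rw [hf1, hf2]
  have hA := fact_ne (n + 1)
  have hC := fact_ne (2 * n + 2)
  have h2 : ((n : ℚ) + 2) ≠ 0 := by positivity
  field_simp
  ring

private lemma step (n k : ℕ) :
    ((n : ℤ) + 2) ^ 2 * ((n + 2).choose k : ℤ) ^ 2 * ((n + 2 + k).choose k : ℤ)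
      - (11 * (n : ℤ) ^ 2 + 33 * (n : ℤ) + 25) * ((n + 1).choose k : ℤ) ^ 2 * ((n + 1 + k).choose k : ℤ)
      - ((n : ℤ) + 1) ^ 2 * (n.choose k : ℤ) ^ 2 * ((n + k).choose k : ℤ)
    = gg n (k + 1) - gg n k := by
  rcases k with _ | j
  · simp only [gg, Nat.choose_zero_right]
    push_cast; ring
  · rcases Nat.lt_or_ge n (j + 1) with hlt | hle
    · -- k = j + 1 > n
      rcases Nat.lt_or_ge (n + 2) (j + 1) with h2 | h2
      · -- all terms vanish
        simp only [gg]
        rw [Nat.choose_eq_zero_of_lt (show n < j + 1 by omega),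
            Nat.choose_eq_zero_of_lt (show n + 1 < j + 1 by omega),
            Nat.choose_eq_zero_of_lt (show n + 2 < j + 1 by omega),
            Nat.choose_eq_zero_of_lt (show n + 1 < j by omega)]
        push_cast; ring
      · have : j = n ∨ j = n + 1 := by omega
        rcases this with rfl | rfl
        · -- k = n + 1 (here n has been substituted by j)
          simp only [gg]
          simp only [show j + 2 + (j + 1) = 2 * j + 3 by omega,
            show j + 1 + (j + 1) = 2 * j + 2 by omega,
            show j + (j + 1) + 1 = 2 * j + 2 by omega,
            show j + (j + 1) = 2 * j + 1 by omega,
            show j + j + 1 + 1 = 2 * j + 2 by omega,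
            show j + j + 1 = 2 * j + 1 by omega,
            show (j + 2).choose (j + 1) = j + 2 from by
              rw [show j + 2 = (j + 1) + 1 by omega, Nat.choose_succ_self_right],
            Nat.choose_self, Nat.choose_succ_self_right, Nat.choose_succ_self]
          have h := aux_np1 j
          qify
          linear_combination h
        · -- k = n + 2
          simp only [gg]
          simp only [show n + 1 + 1 = n + 2 by omega]
          simp only [show n + 2 + (n + 2) = 2 * n + 4 by omega,
            show n + (n + 1) + 1 = 2 * n + 2 by omega,
            show n + (n + 2) + 1 = 2 * n + 3 by omega,
            show n + (n + 2) = 2 * n + 2 by omega,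
            show n + 1 + (n + 2) = 2 * n + 3 by omega,
            Nat.choose_self,
            Nat.choose_eq_zero_of_lt (show n < n + 2 by omega),
            Nat.choose_eq_zero_of_lt (show n + 1 < n + 2 by omega)]
          have h := aux_np2 n
          qify
          linear_combination h
    · -- j + 1 ≤ n : generic case
      obtain ⟨d, rfl⟩ : ∃ d, n = d + j + 1 := ⟨n - (j + 1), by omega⟩
      simp only [gg]
      simp only [show d + j + 1 + 2 = d + j + 3 by omega,
        show d + j + 1 + 2 + (j + 1) = d + 2 * j + 4 by omega,
        show d + j + 1 + 1 = d + j + 2 by omega,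
        show d + j + 1 + 1 + (j + 1) = d + 2 * j + 3 by omega,
        show d + j + 1 + (j + 1) = d + 2 * j + 2 by omega,
        show d + j + 1 + (j + 1) + 1 = d + 2 * j + 3 by omega,
        show d + 2 * j + 2 + 1 = d + 2 * j + 3 by omega,
        show d + j + 1 + j + 1 = d + 2 * j + 2 by omega,
        show d + j + 3 + (j + 1) = d + 2 * j + 4 by omega,
        show d + j + 2 + (j + 1) = d + 2 * j + 3 by omega]
      have h := aux_main d j
      qify
      linear_combination h

theorem zeta2_recurrence (q : ℕ → ℤ)
    (hq : ∀ n : ℕ, q n = ∑ k ∈ Finset.range (n + 1),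
      (n.choose k : ℤ) ^ 2 * ((n + k).choose k : ℤ)) :
    q 0 = 1 ∧ q 1 = 3 ∧ ∀ n : ℕ,
      ((n : ℤ) + 2) ^ 2 * q (n + 2) - (11 * (n : ℤ) ^ 2 + 33 * (n : ℤ) + 25) * q (n + 1) -
        ((n : ℤ) + 1) ^ 2 * q n = 0 := by
  refine ⟨?_, ?_, ?_⟩
  · rw [hq]; simp
  · rw [hq]; norm_num [Finset.sum_range_succ]
  · intro n
    have e2 : q (n + 2) = ∑ k ∈ Finset.range (n + 3),
        ((n + 2).choose k : ℤ) ^ 2 * ((n + 2 + k).choose k : ℤ) := by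
      rw [hq]
    have e1 : q (n + 1) = ∑ k ∈ Finset.range (n + 3),
        ((n + 1).choose k : ℤ) ^ 2 * ((n + 1 + k).choose k : ℤ) := by
      rw [hq, show n + 3 = (n + 1 + 1) + 1 by omega]
      conv_rhs => rw [Finset.sum_range_succ]
      rw [Nat.choose_eq_zero_of_lt (show n + 1 < n + 1 + 1 by omega)]
      push_cast; ring
    have e0 : q n = ∑ k ∈ Finset.range (n + 3),
        (n.choose k : ℤ) ^ 2 * ((n + k).choose k : ℤ) := by
      rw [hq, show n + 3 = (n + 1 + 1) + 1 by omega]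
      conv_rhs => rw [Finset.sum_range_succ]
      conv_rhs => rw [Finset.sum_range_succ]
      rw [Nat.choose_eq_zero_of_lt (show n < n + 1 by omega),
          Nat.choose_eq_zero_of_lt (show n < n + 1 + 1 by omega)]
      push_cast; ring
    rw [e2, e1, e0, Finset.mul_sum, Finset.mul_sum, Finset.mul_sum,
        ← Finset.sum_sub_distrib, ← Finset.sum_sub_distrib]
    have hsum : ∑ k ∈ Finset.range (n + 3),
        (((n : ℤ) + 2) ^ 2 * (((n + 2).choose k : ℤ) ^ 2 * ((n + 2 + k).choose k : ℤ))
          - (11 * (n : ℤ) ^ 2 + 33 * (n : ℤ) + 25) * (((n + 1).choose k : ℤ) ^ 2 * ((n + 1 + k).choose k : ℤ))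
          - ((n : ℤ) + 1) ^ 2 * ((n.choose k : ℤ) ^ 2 * ((n + k).choose k : ℤ)))
        = ∑ k ∈ Finset.range (n + 3), (gg n (k + 1) - gg n k) :=
      Finset.sum_congr rfl fun k _ => by linear_combination step n k
    rw [hsum, Finset.sum_range_sub (gg n)]
    have : gg n (n + 3) = 0 := by
      rw [show n + 3 = (n + 2) + 1 from rfl]
      simp only [gg]
      rw [Nat.choose_succ_self]
      push_cast; ring
    rw [this]
    simp [gg]
end

section
/- The sequence q(n) = ∑_{k=0}^{n} C(n,k)^2 C(n+k,k)^2 (the Apéry numbers) satisfies the recurrence (n+2)^3 q(n+2) − (2n+3)(17n^2 + 51n + 39) q(n+1) + (n+1)^3 q(n) = 0 with q(0)=1, q(1)=5. -/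
/-- Apéry summand. -/
def apF (n k : ℕ) : ℤ := (n.choose k : ℤ) ^ 2 * ((n + k).choose k : ℤ) ^ 2

/-- Zeilberger certificate term. -/
def apB (n k : ℕ) : ℤ :=
  4 * (2 * (n : ℤ) + 1) * (2 * (k : ℤ) ^ 2 + (k : ℤ) - (2 * (n : ℤ) + 1) ^ 2) * apF n k

def apG (n : ℕ) : ℕ → ℤ
  | 0 => 0
  | k + 1 => apB n k

lemma quad (N J a b A1 A3 B1 B3 C1 D1 : ℚ)
    (hd1 : N + 1 - J ≠ 0) (hd2 : N + 1 ≠ 0) (hd3 : N + 2 ≠ 0) (hd4 : N + J + 2 ≠ 0)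
    (h1 : (N + 1 - J) * A1 = (N + 2) * a)
    (h2 : (N - J) * a = (N + 1) * A3)
    (h3 : (N + 2) * B1 = (N + J + 3) * b)
    (h4 : (N + 1) * b = (N + J + 2) * B3)
    (h5 : (J + 1) * a = (N + 1 - J) * C1)
    (h6 : (N + J + 2) * D1 = (J + 1) * b) :
    (N + 2) ^ 3 * (A1 ^ 2 * B1 ^ 2)
      - (2 * N + 3) * (17 * N ^ 2 + 51 * N + 39) * (a ^ 2 * b ^ 2)
      + (N + 1) ^ 3 * (A3 ^ 2 * B3 ^ 2)
      = 4 * (2 * N + 3) * (2 * (J + 1) ^ 2 + (J + 1) - (2 * N + 3) ^ 2) * (a ^ 2 * b ^ 2)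
        - 4 * (2 * N + 3) * (2 * J ^ 2 + J - (2 * N + 3) ^ 2) * (C1 ^ 2 * D1 ^ 2) := by
  have eA1 : A1 = (N + 2) * a / (N + 1 - J) := by field_simp; linear_combination h1
  have eA3 : A3 = (N - J) * a / (N + 1) := by field_simp; linear_combination -h2
  have eB1 : B1 = (N + J + 3) * b / (N + 2) := by field_simp; linear_combination h3
  have eB3 : B3 = (N + 1) * b / (N + J + 2) := by field_simp; linear_combination -h4
  have eC1 : C1 = (J + 1) * a / (N + 1 - J) := by field_simp; linear_combination -h5
  have eD1 : D1 = (J + 1) * b / (N + J + 2) := by field_simp; linear_combination h6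
  rw [eA1, eA3, eB1, eB3, eC1, eD1]
  field_simp
  ring

lemma keystep (n k : ℕ) :
    ((n : ℤ) + 2) ^ 3 * apF (n + 2) k
      - (2 * (n : ℤ) + 3) * (17 * (n : ℤ) ^ 2 + 51 * (n : ℤ) + 39) * apF (n + 1) k
      + ((n : ℤ) + 1) ^ 3 * apF n k
      = apG (n + 1) (k + 1) - apG (n + 1) k := by
  rcases k with _ | j
  · simp [apF, apG, apB]
    ring
  · rcases le_or_gt j n with hj | hj
    · -- generic case 1 ≤ k = j+1 ≤ n+1
      simp only [apF, apG, apB,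
        show n + 2 + (j + 1) = n + j + 3 from by omega,
        show n + 1 + (j + 1) = n + j + 2 from by omega,
        show n + (j + 1) = n + j + 1 from by omega,
        show n + 1 + j = n + j + 1 from by omega]
      have h1 := Nat.choose_mul_succ_eq (n + 1) (j + 1)
      have h2 := Nat.choose_mul_succ_eq n (j + 1)
      have h3 := Nat.choose_mul_succ_eq (n + j + 2) (j + 1)
      have h4 := Nat.choose_mul_succ_eq (n + j + 1) (j + 1)
      have h5 := Nat.choose_succ_right_eq (n + 1) j
      have h6 := Nat.add_one_mul_choose_eq (n + j + 1) j
      qify [show j + 1 ≤ n + 2 from by omega] at h1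
      qify [show j + 1 ≤ n + 1 from by omega] at h2
      qify [show j + 1 ≤ n + j + 3 from by omega] at h3
      qify [show j + 1 ≤ n + j + 2 from by omega] at h4
      qify [show j ≤ n + 1 from by omega] at h5
      qify at h6
      simp only [Nat.succ_eq_add_one, show n + 1 + 1 = n + 2 from by omega,
        show n + j + 2 + 1 = n + j + 3 from by omega,
        show n + j + 1 + 1 = n + j + 2 from by omega] at h1 h2 h3 h4 h5 h6
      have hJ : (j : ℚ) ≤ (n : ℚ) := by exact_mod_cast hj
      have key := quad (n : ℚ) (j : ℚ)
        ((n + 1).choose (j + 1) : ℚ) (((n + j + 2).choose (j + 1) : ℕ) : ℚ)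
        (((n + 2).choose (j + 1) : ℕ) : ℚ) ((n.choose (j + 1) : ℕ) : ℚ)
        (((n + j + 3).choose (j + 1) : ℕ) : ℚ) (((n + j + 1).choose (j + 1) : ℕ) : ℚ)
        (((n + 1).choose j : ℕ) : ℚ) (((n + j + 1).choose j : ℕ) : ℚ)
        (by linarith) (by positivity) (by positivity) (by positivity)
        (by linear_combination -h1) (by linear_combination -h2)
        (by linear_combination -h3) (by linear_combination -h4)
        (by linear_combination h5) (by linear_combination h6)
      exact_mod_cast key
    · rcases eq_or_lt_of_le (show n + 1 ≤ j from hj) with hj2 | hj2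
      · -- k = n + 2 : central binomial boundary
        subst hj2
        have hc := Nat.succ_mul_centralBinom_succ (n + 1)
        simp only [Nat.centralBinom,
          show 2 * (n + 1 + 1) = n + 1 + 1 + (n + 1 + 1) from by omega,
          show 2 * (n + 1) = n + 1 + (n + 1) from by omega] at hc
        zify at hc
        simp only [apF, apG, apB]
        simp [Nat.choose_eq_zero_of_lt (show n < n + 1 + 1 from by omega), Nat.choose_eq_zero_of_lt, Nat.choose_self]
        linear_combination ((((n:ℤ)+2) * ((n + 1 + 1 + (n + 1 + 1)).choose (n + 1 + 1) : ℤ)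
            + 2 * (2*(n:ℤ)+3) * ((n + 1 + (n + 1)).choose (n + 1) : ℤ)) * ((n:ℤ)+2)) * hc
      · -- k ≥ n + 3
        simp [apF, apG, apB, Nat.choose_eq_zero_of_lt,
          show n + 2 < j + 1 from by omega, show n + 1 < j + 1 from by omega,
          show n < j + 1 from by omega, show n + 1 < j + 2 from by omega,
          show n + 1 < j from by omega]

theorem apery_recurrence (q : ℕ → ℤ)
    (hq : ∀ n : ℕ, q n = ∑ k ∈ Finset.range (n + 1),
      (n.choose k : ℤ) ^ 2 * ((n + k).choose k : ℤ) ^ 2) :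
    q 0 = 1 ∧ q 1 = 5 ∧ ∀ n : ℕ,
      ((n : ℤ) + 2) ^ 3 * q (n + 2) -
        (2 * (n : ℤ) + 3) * (17 * (n : ℤ) ^ 2 + 51 * (n : ℤ) + 39) * q (n + 1) +
        ((n : ℤ) + 1) ^ 3 * q n = 0 := by
  have hq' : ∀ n : ℕ, q n = ∑ k ∈ Finset.range (n + 1), apF n k := hq
  refine ⟨by rw [hq' 0]; norm_num [apF], by rw [hq' 1]; norm_num [Finset.sum_range_succ, apF], ?_⟩
  intro n
  have e2 : q (n + 2) = ∑ k ∈ Finset.range (n + 3), apF (n + 2) k := hq' (n + 2)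
  have z1 : apF (n + 1) (n + 2) = 0 := by
    simp [apF, Nat.choose_eq_zero_of_lt]
  have z2 : apF n (n + 2) = 0 := by
    simp [apF, Nat.choose_eq_zero_of_lt (show n < n + 2 from by omega)]
  have z3 : apF n (n + 1) = 0 := by
    simp [apF, Nat.choose_eq_zero_of_lt]
  have e1 : q (n + 1) = ∑ k ∈ Finset.range (n + 3), apF (n + 1) k := by
    rw [hq' (n + 1), show n + 3 = (n + 2) + 1 from rfl]
    conv_rhs => rw [Finset.sum_range_succ]
    rw [z1, add_zero]
  have e0 : q n = ∑ k ∈ Finset.range (n + 3), apF n k := by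
    rw [hq' n, show n + 3 = (n + 1) + 1 + 1 from rfl]
    conv_rhs => rw [Finset.sum_range_succ, Finset.sum_range_succ]
    rw [z2, z3, add_zero, add_zero]
  rw [e2, e1, e0, Finset.mul_sum, Finset.mul_sum, Finset.mul_sum,
    ← Finset.sum_sub_distrib, ← Finset.sum_add_distrib]
  rw [Finset.sum_congr rfl fun k _ => keystep n k, Finset.sum_range_sub (apG (n + 1))]
  simp [apG, apB, apF, Nat.choose_eq_zero_of_lt]
end

section
/- For rational a > 0, a ≠ 1, and every natural number n, the integral I(n) = ∫_0^1 (x(1−x)/(1−(1−a)x))^n / (1−(1−a)x) dx is a linear combination r(n) + s(n)·ln(a) with rational coefficients r(n), s(n). -/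
open intervalIntegral

private lemma pos_aux {a : ℝ} (ha : 0 < a) {x : ℝ} (hx : x ∈ Set.uIcc (0:ℝ) 1) :
    0 < 1 - (1 - a) * x := by
  rw [Set.uIcc_of_le (by norm_num)] at hx
  obtain ⟨h0, h1⟩ := hx
  rcases le_or_gt a 1 with h | h
  · nlinarith [mul_nonneg (sub_nonneg.2 h1) (sub_nonneg.2 h)]
  · nlinarith [mul_nonneg h0 (sub_nonneg.2 h.le)]

private lemma integrable_aux {a : ℝ} (ha : 0 < a) (n : ℕ) (m : ℤ) :
    IntervalIntegrable (fun x : ℝ => (x * (1 - x)) ^ n * (1 - (1 - a) * x) ^ m)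
      MeasureTheory.volume 0 1 := by
  apply ContinuousOn.intervalIntegrable
  apply ContinuousOn.mul
  · exact (((continuous_id.mul (continuous_const.sub continuous_id)).pow n)).continuousOn
  · apply ContinuousOn.zpow₀
    · exact (continuous_const.sub (continuous_const.mul continuous_id)).continuousOn
    · intro x hx
      exact Or.inl (pos_aux ha hx).ne'

private lemma base_aux (a : ℚ) (ha : 0 < a) (ha1 : a ≠ 1) (m : ℤ) :
    ∃ r s : ℚ, (∫ x in (0:ℝ)..1, (1 - (1 - (a:ℝ)) * x) ^ m)
      = (r : ℝ) + (s : ℝ) * Real.log a := by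
  have haR : (0:ℝ) < (a:ℝ) := by exact_mod_cast ha
  have ha1R : (a:ℝ) ≠ 1 := by exact_mod_cast ha1
  have hc : (1:ℝ) - (a:ℝ) ≠ 0 := sub_ne_zero.mpr (fun h => ha1R h.symm)
  have hint : IntervalIntegrable (fun x : ℝ => (1 - (1 - (a:ℝ)) * x) ^ m)
      MeasureTheory.volume 0 1 := by
    simpa using integrable_aux haR 0 m
  have hlin : ∀ x : ℝ, HasDerivAt (fun y : ℝ => 1 - (1 - (a:ℝ)) * y) (-(1 - (a:ℝ))) x := by
    intro x
    simpa using ((hasDerivAt_id x).const_mul (1 - (a:ℝ))).const_sub 1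
  rcases eq_or_ne m (-1) with rfl | hm
  · refine ⟨0, -(1/(1-a)), ?_⟩
    have hF : ∀ x ∈ Set.uIcc (0:ℝ) 1,
        HasDerivAt (fun y : ℝ => -Real.log (1 - (1-(a:ℝ))*y) / (1-(a:ℝ)))
          ((1 - (1-(a:ℝ))*x) ^ (-1:ℤ)) x := by
      intro x hx
      have hu := (pos_aux haR hx).ne'
      have h2 := ((Real.hasDerivAt_log hu).comp x (hlin x)).neg.div_const (1-(a:ℝ))
      refine h2.congr_deriv (Eq.symm ?_)
      rw [zpow_neg_one]
      field_simp
    rw [intervalIntegral.integral_eq_sub_of_hasDerivAt hF hint]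
    have h1 : (1:ℝ) - (1-(a:ℝ))*1 = (a:ℝ) := by ring
    have h0 : (1:ℝ) - (1-(a:ℝ))*0 = 1 := by ring
    rw [h1, h0, Real.log_one]
    push_cast
    field_simp
    ring
  · have hm1 : (m + 1 : ℤ) ≠ 0 := by omega
    have hm1R : ((m:ℝ) + 1) ≠ 0 := by exact_mod_cast hm1
    refine ⟨(a ^ (m+1) - 1) / ((m+1) * (a - 1)), 0, ?_⟩
    have hF : ∀ x ∈ Set.uIcc (0:ℝ) 1,
        HasDerivAt (fun y : ℝ => (1 - (1-(a:ℝ))*y) ^ (m+1) / (((m:ℝ)+1) * (-(1-(a:ℝ)))))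
          ((1 - (1-(a:ℝ))*x) ^ m) x := by
      intro x hx
      have hu := (pos_aux haR hx).ne'
      have h2 := ((hasDerivAt_zpow (m+1) _ (Or.inl hu)).comp x (hlin x)).div_const
        (((m:ℝ)+1) * (-(1-(a:ℝ))))
      have hd : ((m:ℝ)+1) * -(1-(a:ℝ)) ≠ 0 := mul_ne_zero hm1R (neg_ne_zero.2 hc)
      refine h2.congr_deriv (Eq.symm ?_)
      rw [Int.add_sub_cancel]
      push_cast
      rw [eq_div_iff hd]
      ring
    rw [intervalIntegral.integral_eq_sub_of_hasDerivAt hF hint]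
    have h1 : (1:ℝ) - (1-(a:ℝ))*1 = (a:ℝ) := by ring
    have h0 : (1:ℝ) - (1-(a:ℝ))*0 = 1 := by ring
    rw [h1, h0, one_zpow]
    have haR0 : (a:ℝ) ≠ 0 := haR.ne'
    push_cast
    field_simp
    ring

private lemma main_aux (a : ℚ) (ha : 0 < a) (ha1 : a ≠ 1) (n : ℕ) : ∀ m : ℤ,
    ∃ r s : ℚ, (∫ x in (0:ℝ)..1, (x * (1 - x)) ^ n * (1 - (1 - (a:ℝ)) * x) ^ m)
      = (r : ℝ) + (s : ℝ) * Real.log a := by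
  have haR : (0:ℝ) < (a:ℝ) := by exact_mod_cast ha
  have ha1R : (a:ℝ) ≠ 1 := by exact_mod_cast ha1
  have hc : (1:ℝ) - (a:ℝ) ≠ 0 := sub_ne_zero.mpr (fun h => ha1R h.symm)
  induction n with
  | zero =>
    intro m
    obtain ⟨r, s, h⟩ := base_aux a ha ha1 m
    refine ⟨r, s, ?_⟩
    simpa using h
  | succ n ih =>
    intro m
    obtain ⟨r2, s2, h2⟩ := ih (m+2)
    obtain ⟨r1, s1, h1⟩ := ih (m+1)
    obtain ⟨r0, s0, h0⟩ := ih m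
    refine ⟨(-r2 + (1+a)*r1 - a*r0) / (1-a)^2, (-s2 + (1+a)*s1 - a*s0) / (1-a)^2, ?_⟩
    have key : Set.EqOn
        (fun x : ℝ => (x * (1 - x)) ^ (n+1) * (1 - (1 - (a:ℝ)) * x) ^ m)
        (fun x : ℝ => (((1:ℝ)-(a:ℝ))^2)⁻¹ *
          (-((x * (1 - x)) ^ n * (1 - (1 - (a:ℝ)) * x) ^ (m+2))
            + (1+(a:ℝ)) * ((x * (1 - x)) ^ n * (1 - (1 - (a:ℝ)) * x) ^ (m+1))
            - (a:ℝ) * ((x * (1 - x)) ^ n * (1 - (1 - (a:ℝ)) * x) ^ m)))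
        (Set.uIcc (0:ℝ) 1) := by
      intro x hx
      have hu := (pos_aux haR hx).ne'
      simp only
      rw [zpow_add₀ hu m 2, zpow_add₀ hu m 1, zpow_one, zpow_two]
      field_simp
      ring
    rw [intervalIntegral.integral_congr key, intervalIntegral.integral_const_mul]
    have hA := integrable_aux haR n (m+2)
    have hAneg : IntervalIntegrable
        (fun x : ℝ => -((x * (1 - x)) ^ n * (1 - (1 - (a:ℝ)) * x) ^ (m+2)))
        MeasureTheory.volume 0 1 := hA.neg
    have hB : IntervalIntegrable
        (fun x : ℝ => (1+(a:ℝ)) * ((x * (1 - x)) ^ n * (1 - (1 - (a:ℝ)) * x) ^ (m+1)))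
        MeasureTheory.volume 0 1 := (integrable_aux haR n (m+1)).const_mul (1+(a:ℝ))
    have hC : IntervalIntegrable
        (fun x : ℝ => (a:ℝ) * ((x * (1 - x)) ^ n * (1 - (1 - (a:ℝ)) * x) ^ m))
        MeasureTheory.volume 0 1 := (integrable_aux haR n m).const_mul (a:ℝ)
    rw [intervalIntegral.integral_sub (hAneg.add hB) hC,
      intervalIntegral.integral_add hAneg hB,
      intervalIntegral.integral_neg,
      intervalIntegral.integral_const_mul, intervalIntegral.integral_const_mul,
      h2, h1, h0]
    push_cast
    field_simp
    ring

theorem I_rational_combination (a : ℚ) (ha : 0 < a) (ha1 : a ≠ 1) (n : ℕ) :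
    ∃ r s : ℚ,
      (∫ x in (0:ℝ)..1,
        (x * (1 - x) / (1 - (1 - (a : ℝ)) * x)) ^ n / (1 - (1 - (a : ℝ)) * x))
        = (r : ℝ) + (s : ℝ) * Real.log a := by
  have haR : (0:ℝ) < (a:ℝ) := by exact_mod_cast ha
  obtain ⟨r, s, h⟩ := main_aux a ha ha1 n (-(n+1))
  refine ⟨r, s, ?_⟩
  rw [← h]
  apply intervalIntegral.integral_congr
  intro x hx
  have hu := (pos_aux haR hx).ne'
  simp only
  rw [div_pow, div_div, ← pow_succ, ← zpow_natCast (1 - (1-(a:ℝ))*x) (n+1),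
    zpow_neg, div_eq_mul_inv]
  push_cast
  ring_nf
end
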